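/- For all positive integers $n$ and $k$ with $1 \leq k \leq n$, the rational function $B_{n,k}(q) = \frac{[k]}{[n]}\binom{2n}{n-k}_q$ is a polynomial in $q$ with integer coefficients. -/
import Mathlib

open Polynomial Finset

/-- The `q`-integer `[n] = 1 + q + ⋯ + q^(n-1)` as a polynomial in `ℤ[q]`. -/
noncomputable def qint (n : ℕ) : Polynomial ℤ := ∑ i ∈ Finset.range n, Polynomial.X ^ i

/-- The Gaussian binomial coefficient `[n choose k]_q` in `ℤ[q]`, via the `q`-Pascal rule. -/
noncomputable def qbinom : ℕ → ℕ → Polynomial ℤ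
  | _, 0 => 1
  | 0, _ + 1 => 0
  | n + 1, k + 1 => qbinom n k + Polynomial.X ^ (k + 1) * qbinom n (k + 1)

lemma qint_add (a b : ℕ) : qint (a + b) = qint a + X ^ a * qint b := by
  induction b with
  | zero => simp [qint]
  | succ b ih =>
      rw [show a + (b+1) = (a+b) + 1 by ring]
      simp only [qint, Finset.sum_range_succ] at *
      rw [ih, pow_add]; ring

lemma qint_ne_zero {n : ℕ} (hn : 1 ≤ n) : qint n ≠ 0 := by
  intro h
  have := congrArg (Polynomial.eval 1) h
  simp [qint] at this
  omega

lemma qbinom_zero (m : ℕ) : qbinom m 0 = 1 := by cases m <;> rfl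

lemma qbinom_eq_zero : ∀ m j, m < j → qbinom m j = 0 := by
  intro m
  induction m with
  | zero => intro j hj; cases j with
      | zero => omega
      | succ j => rfl
  | succ m ih =>
      intro j hj
      cases j with
      | zero => omega
      | succ j =>
          show qbinom m j + X ^ (j+1) * qbinom m (j+1) = 0
          rw [ih j (by omega), ih (j+1) (by omega)]; ring

lemma qbinom_self : ∀ m, qbinom m m = 1 := by
  intro m
  induction m with
  | zero => rfl
  | succ m ih =>
      show qbinom m m + X ^ (m+1) * qbinom m (m+1) = 1
      rw [ih, qbinom_eq_zero m (m+1) (by omega)]; ring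

noncomputable def qfact (n : ℕ) : Polynomial ℤ := ∏ i ∈ Finset.range n, qint (i + 1)

lemma qfact_succ (n : ℕ) : qfact (n + 1) = qfact n * qint (n + 1) :=
  Finset.prod_range_succ _ _

lemma qfact_ne_zero (n : ℕ) : qfact n ≠ 0 := by
  induction n with
  | zero => simp [qfact]
  | succ n ih =>
      rw [qfact_succ]
      exact mul_ne_zero ih (qint_ne_zero (by omega))

lemma qbinom_fact : ∀ m j, j ≤ m → qbinom m j * (qfact j * qfact (m - j)) = qfact m := by
  intro m
  induction m with
  | zero => intro j hj; interval_cases j; simp [qbinom_zero, qfact]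
  | succ m ih =>
      intro j hj
      cases j with
      | zero => simp [qbinom_zero, qfact]
      | succ j =>
          rcases Nat.lt_or_ge j m with hlt | hge
          · obtain ⟨t, rfl⟩ : ∃ t, m = j + t + 1 := ⟨m - j - 1, by omega⟩
            have IH1 := ih j (by omega)
            have IH2 := ih (j+1) (by omega)
            have e1 : j + t + 1 - j = t + 1 := by omega
            have e2 : j + t + 1 - (j + 1) = t := by omega
            have e3 : j + t + 1 + 1 - (j + 1) = t + 1 := by omega
            rw [e1] at IH1
            rw [e2] at IH2
            show (qbinom (j+t+1) j + X ^ (j+1) * qbinom (j+t+1) (j+1)) *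
                (qfact (j+1) * qfact (j + t + 1 + 1 - (j + 1))) = qfact (j + t + 1 + 1)
            rw [e3, qfact_succ (j+t+1),
              show j + t + 1 + 1 = (j + 1) + (t + 1) by ring, qint_add (j+1) (t+1)]
            have ej : qfact (j+1) = qfact j * qint (j+1) := qfact_succ j
            have et : qfact (t+1) = qfact t * qint (t+1) := qfact_succ t
            linear_combination qint (j+1) * IH1 + X^(j+1) * qint (t+1) * IH2 +
              qbinom (j+t+1) j * qfact (t+1) * ej +
              X^(j+1) * qbinom (j+t+1) (j+1) * qfact (j+1) * et
          · have hjm : j = m := by omega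
            subst hjm
            show (qbinom j j + X ^ (j+1) * qbinom j (j+1)) *
                (qfact (j+1) * qfact (j + 1 - (j + 1))) = qfact (j + 1)
            rw [qbinom_self, qbinom_eq_zero j (j+1) (by omega), Nat.sub_self]
            simp [qfact]

lemma qbinom_symm {m j : ℕ} (hj : j ≤ m) : qbinom m j = qbinom m (m - j) := by
  have h1 := qbinom_fact m j hj
  have h2 := qbinom_fact m (m - j) (by omega)
  rw [show m - (m - j) = j by omega] at h2
  have hne : qfact j * qfact (m - j) ≠ 0 :=
    mul_ne_zero (qfact_ne_zero j) (qfact_ne_zero (m - j))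
  apply mul_right_cancel₀ hne
  linear_combination h1 - h2

lemma qbinom_absorb {m j : ℕ} (h1 : 1 ≤ j) (h2 : j ≤ m) :
    qint j * qbinom m j = qint m * qbinom (m - 1) (j - 1) := by
  have hne : qfact (j - 1) * qfact (m - j) ≠ 0 :=
    mul_ne_zero (qfact_ne_zero _) (qfact_ne_zero _)
  apply mul_right_cancel₀ hne
  have hf1 := qbinom_fact m j h2
  have hf2 := qbinom_fact (m - 1) (j - 1) (by omega)
  have ej : qfact j = qfact (j - 1) * qint j := by
    conv_lhs => rw [show j = (j - 1) + 1 by omega, qfact_succ, show j - 1 + 1 = j by omega]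
  have em : qfact m = qfact (m - 1) * qint m := by
    conv_lhs => rw [show m = (m - 1) + 1 by omega, qfact_succ, show m - 1 + 1 = m by omega]
  rw [show m - 1 - (j - 1) = m - j by omega] at hf2
  rw [ej] at hf1
  calc qint j * qbinom m j * (qfact (j-1) * qfact (m-j))
      = qbinom m j * (qfact (j-1) * qint j * qfact (m-j)) := by ring
    _ = qfact m := hf1
    _ = qint m * (qfact (m-1)) := by rw [em]; ring
    _ = qint m * (qbinom (m-1) (j-1) * (qfact (j-1) * qfact (m-j))) := by rw [hf2]
    _ = qint m * qbinom (m-1) (j-1) * (qfact (j-1) * qfact (m-j)) := by ring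

theorem stmt_11 (n k : ℕ) (hk1 : 1 ≤ k) (hkn : k ≤ n) :
    ∃ p : Polynomial ℤ,
      Polynomial.aeval (RatFunc.X : RatFunc ℚ) p
        = Polynomial.aeval (RatFunc.X : RatFunc ℚ) (qint k) /
            Polynomial.aeval (RatFunc.X : RatFunc ℚ) (qint n) *
            Polynomial.aeval (RatFunc.X : RatFunc ℚ) (qbinom (2 * n) (n - k)) := by
  refine ⟨(1 + X ^ n) * qbinom (2 * n - 1) (n + k - 1) - X ^ k * qbinom (2 * n) (n - k), ?_⟩
  have key : qint k * qbinom (2 * n) (n - k)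
      = qint n * ((1 + X ^ n) * qbinom (2 * n - 1) (n + k - 1)
          - X ^ k * qbinom (2 * n) (n - k)) := by
    have h1 : qint (n + k) = qint k + X ^ k * qint n := by
      rw [show n + k = k + n by ring]; exact qint_add k n
    have hsym : qbinom (2 * n) (n - k) = qbinom (2 * n) (n + k) := by
      rw [qbinom_symm (show n - k ≤ 2 * n by omega), show 2*n - (n-k) = n + k by omega]
    have habs : qint (n + k) * qbinom (2 * n) (n + k)
        = qint (2 * n) * qbinom (2 * n - 1) (n + k - 1) :=
      qbinom_absorb (by omega) (by omega)
    have h2n : qint (2 * n) = qint n * (1 + X ^ n) := by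
      rw [show 2 * n = n + n by ring, qint_add]; ring
    rw [h2n] at habs
    linear_combination habs - qbinom (2*n) (n+k) * h1 +
      (qint k + X^k * qint n) * hsym
  have hmapped := congrArg (Polynomial.aeval (RatFunc.X : RatFunc ℚ)) key
  rw [map_mul, map_mul] at hmapped
  have hne : Polynomial.aeval (RatFunc.X : RatFunc ℚ) (qint n) ≠ 0 := by
    intro h
    rw [← RatFunc.algebraMap_X, Polynomial.aeval_algebraMap_apply] at h
    have h0 : Polynomial.aeval (Polynomial.X : Polynomial ℚ) (qint n) = 0 :=
      RatFunc.algebraMap_injective ℚ (by simpa using h)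
    have := congrArg (Polynomial.eval (1 : ℚ)) h0
    simp [qint, map_sum] at this
    omega
  rw [div_mul_eq_mul_div, eq_div_iff hne]
  linear_combination hmapped.symm
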